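/- Let N be a positive integer and M an N×N complex matrix. Suppose dim ker(M − I) = 1, there exist vectors φ₁ ≠ 0 and φ₂ in ℂ^N with (M − I)φ₁ = 0 and (M − I)φ₂ = φ₁, and a row vector ψ₂ with ψ₂(M − I) = 0 and ψ₂·φ₂ ≠ 0. Then the algebraic multiplicity of the eigenvalue 1 of M is exactly 2, i.e. (X − 1)² divides the characteristic polynomial of M but (X − 1)³ does not. -/

import Mathlib

open Matrix Polynomial

/-- Charpoly of the linear map `mulVecLin A` equals the matrix charpoly. -/
lemma charpoly_mulVecLin_aux {N : ℕ} (A : Matrix (Fin N) (Fin N) ℂ) :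
    (A.mulVecLin).charpoly = A.charpoly := by
  have h := LinearMap.charpoly_toMatrix (A.mulVecLin) (Pi.basisFun ℂ (Fin N))
  rw [LinearMap.toMatrix_eq_toMatrix'] at h
  rw [← h, ← Matrix.toLin'_apply' A, LinearMap.toMatrix'_toLin']

/-- Translation of the characteristic polynomial. -/
lemma charpoly_sub_one_aux {N : ℕ} (M : Matrix (Fin N) (Fin N) ℂ) :
    (M - 1).charpoly = M.charpoly.comp (X + C 1) := by
  rw [Matrix.charpoly, Matrix.charpoly, comp_eq_aeval, AlgHom.map_det]
  congr 1
  ext i j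
  rw [AlgHom.mapMatrix_apply, Matrix.map_apply]
  by_cases hij : i = j
  · subst hij
    simp [charmatrix_apply_eq, Matrix.sub_apply, Matrix.one_apply_eq, map_sub]
    ring
  · simp [charmatrix_apply_ne _ _ _ hij, Matrix.sub_apply, Matrix.one_apply_ne hij]

theorem stmt_9 (N : ℕ) (hN : 0 < N) (M : Matrix (Fin N) (Fin N) ℂ)
    (hker : Module.finrank ℂ (LinearMap.ker ((M - 1).mulVecLin)) = 1)
    (φ₁ φ₂ : Fin N → ℂ) (hφ₁ : φ₁ ≠ 0)
    (h1 : (M - 1) *ᵥ φ₁ = 0)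
    (h2 : (M - 1) *ᵥ φ₂ = φ₁)
    (ψ₂ : Fin N → ℂ)
    (h3 : ψ₂ ᵥ* (M - 1) = 0)
    (h4 : ψ₂ ⬝ᵥ φ₂ ≠ 0) :
    (X - 1) ^ 2 ∣ M.charpoly ∧ ¬ (X - 1) ^ 3 ∣ M.charpoly := by
  set φ : Module.End ℂ (Fin N → ℂ) := (M - 1).mulVecLin with hφdef
  have happ : ∀ v, φ v = (M - 1) *ᵥ v := fun v => rfl
  -- ψ₂ annihilates the image of φ
  have hψim : ∀ v, ψ₂ ⬝ᵥ (φ v) = 0 := by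
    intro v
    rw [happ, Matrix.dotProduct_mulVec, h3, zero_dotProduct]
  have hψφ₁ : ψ₂ ⬝ᵥ φ₁ = 0 := by rw [← h2, ← happ]; exact hψim φ₂
  -- the kernel of φ is the span of φ₁
  have hφ₁mem : φ₁ ∈ LinearMap.ker φ := by rw [LinearMap.mem_ker, happ, h1]
  have hK1 : LinearMap.ker φ = Submodule.span ℂ {φ₁} := by
    symm
    apply Submodule.eq_of_le_of_finrank_eq
    · rw [Submodule.span_le, Set.singleton_subset_iff]; exact hφ₁mem
    · rw [finrank_span_singleton hφ₁, hker]
  -- key: no Jordan chain of length 3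
  have key : ∀ v, φ (φ (φ v)) = 0 → φ (φ v) = 0 := by
    intro v hv
    have hmem : φ (φ v) ∈ LinearMap.ker φ := hv
    rw [hK1, Submodule.mem_span_singleton] at hmem
    obtain ⟨a, ha⟩ := hmem
    have hφφ₂ : φ φ₂ = φ₁ := by rw [happ, h2]
    have hsub : φ (φ v - a • φ₂) = 0 := by
      rw [map_sub, _root_.map_smul, hφφ₂, ← ha]; abel
    have hmem2 : φ v - a • φ₂ ∈ LinearMap.ker φ := hsub
    rw [hK1, Submodule.mem_span_singleton] at hmem2
    obtain ⟨b, hb⟩ := hmem2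
    have hφv : φ v = a • φ₂ + b • φ₁ := by rw [hb]; abel
    have h0 : ψ₂ ⬝ᵥ (φ v) = 0 := hψim v
    rw [hφv, dotProduct_add, dotProduct_smul, dotProduct_smul,
      hψφ₁, smul_zero, add_zero, smul_eq_mul, mul_eq_zero] at h0
    have ha0 : a = 0 := h0.resolve_right h4
    have : φ v ∈ LinearMap.ker φ := by
      rw [hφv, ha0, zero_smul, zero_add]
      exact Submodule.smul_mem _ b hφ₁mem
    exact this
  -- φ₁ and φ₂ are linearly independent
  have hli : LinearIndependent ℂ ![φ₁, φ₂] := by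
    rw [LinearIndependent.pair_iff]
    intro s t hst
    have h0 : ψ₂ ⬝ᵥ (s • φ₁ + t • φ₂) = 0 := by rw [hst, dotProduct_zero]
    rw [dotProduct_add, dotProduct_smul, dotProduct_smul,
      hψφ₁, smul_zero, zero_add, smul_eq_mul, mul_eq_zero] at h0
    have ht : t = 0 := h0.resolve_right h4
    subst ht
    rw [zero_smul, add_zero, smul_eq_zero] at hst
    exact ⟨hst.resolve_right hφ₁, rfl⟩
  -- the kernel of φ² is the span of φ₁, φ₂
  have hφφ₂ : φ φ₂ = φ₁ := by rw [happ, h2]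
  have hφφ₁ : φ φ₁ = 0 := by rw [happ, h1]
  have hK2 : LinearMap.ker (φ ^ 2) = Submodule.span ℂ (Set.range ![φ₁, φ₂]) := by
    apply le_antisymm
    · intro v hv
      rw [LinearMap.mem_ker, pow_two, Module.End.mul_apply] at hv
      have hmem : φ v ∈ LinearMap.ker φ := hv
      rw [hK1, Submodule.mem_span_singleton] at hmem
      obtain ⟨a, ha⟩ := hmem
      have hsub : φ (v - a • φ₂) = 0 := by rw [map_sub, _root_.map_smul, hφφ₂, ← ha]; abel
      have hmem2 : v - a • φ₂ ∈ LinearMap.ker φ := hsub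
      rw [hK1, Submodule.mem_span_singleton] at hmem2
      obtain ⟨b, hb⟩ := hmem2
      have hv2 : v = a • φ₂ + b • φ₁ := by rw [hb]; abel
      rw [hv2]
      have m1 : φ₁ ∈ Set.range ![φ₁, φ₂] := ⟨0, rfl⟩
      have m2 : φ₂ ∈ Set.range ![φ₁, φ₂] := ⟨1, rfl⟩
      exact Submodule.add_mem _
        (Submodule.smul_mem _ a (Submodule.subset_span m2))
        (Submodule.smul_mem _ b (Submodule.subset_span m1))
    · rw [Submodule.span_le]
      rintro x ⟨i, rfl⟩
      fin_cases i <;>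
        simp only [LinearMap.mem_ker, pow_two, Module.End.mul_apply, SetLike.mem_coe,
          Matrix.cons_val_zero, Matrix.cons_val_one, Matrix.head_cons] <;>
        simp [hφφ₁, hφφ₂]
  -- kernels stabilize at φ²
  have hstab : ∀ n, LinearMap.ker (φ ^ n) ≤ LinearMap.ker (φ ^ 2) := by
    intro n
    induction n with
    | zero =>
      intro v hv
      rw [pow_zero, LinearMap.mem_ker, Module.End.one_apply] at hv
      simp [LinearMap.mem_ker, hv]
    | succ n ih =>
      intro v hv
      rw [LinearMap.mem_ker, pow_succ, Module.End.mul_apply] at hv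
      have hv' : φ v ∈ LinearMap.ker (φ ^ 2) := ih hv
      rw [LinearMap.mem_ker, pow_two, Module.End.mul_apply] at hv'
      rw [LinearMap.mem_ker, pow_two, Module.End.mul_apply]
      exact key v hv'
  have hsup : (⨆ n : ℕ, LinearMap.ker (φ ^ n)) = LinearMap.ker (φ ^ 2) :=
    le_antisymm (iSup_le hstab) (le_iSup (fun n => LinearMap.ker (φ ^ n)) 2)
  -- dimension of the generalized eigenspace
  have hmax : φ.maxGenEigenspace 0 = LinearMap.ker (φ ^ 2) := by
    rw [← hsup]
    simp [← Module.End.iSup_genEigenspace_eq, Module.End.genEigenspace_nat]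
  have hdim : Module.finrank ℂ (φ.maxGenEigenspace 0) = 2 := by
    rw [hmax, hK2, finrank_span_eq_card hli]
    simp
  have htd : natTrailingDegree φ.charpoly = 2 := by
    rw [← LinearMap.finrank_maxGenEigenspace_zero_eq, hdim]
  -- transfer to the matrix charpoly
  have hchar : φ.charpoly = M.charpoly.comp (X + C 1) := by
    rw [hφdef, charpoly_mulVecLin_aux, charpoly_sub_one_aux]
  have hne : φ.charpoly ≠ 0 := φ.charpoly_monic.ne_zero
  constructor
  · rw [show (1 : ℂ[X]) = C 1 by simp, X_sub_C_pow_dvd_iff, ← hchar, X_pow_dvd_iff]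
    intro d hd
    exact coeff_eq_zero_of_lt_natTrailingDegree (by omega)
  · rw [show (1 : ℂ[X]) = C 1 by simp, X_sub_C_pow_dvd_iff, ← hchar, X_pow_dvd_iff]
    push_neg
    refine ⟨2, by norm_num, ?_⟩
    rw [← htd, ← trailingCoeff]
    exact trailingCoeff_nonzero_iff_nonzero.mpr hne
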